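/- Let d ≥ 2 and let v : (0,∞) → ℝ be continuous with: (i) there exist C > 0 and s ∈ (0,2) such that v(r) ≥ -C·r^{-s} for r ∈ (0,1]; (ii) there exist c > 0, m ∈ (-2,0) and R > 0 such that -(1/c)·r^m ≤ v(r) ≤ -c·r^m for all r ≥ R. For λ < 0 define p_λ := sup{ℓ ∈ ℕ : ℓ ≥ 1 and inf_{r>0}(v(r) + ℓ(ℓ+d-2)/r²) < λ}. Then there exist K ≥ 1 and δ > 0 such that for all λ ∈ (-δ, 0), (1/K)·(-λ)^{(m+2)/(2m)} ≤ p_λ ≤ K·(-λ)^{(m+2)/(2m)}. -/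

import Mathlib

set_option maxHeartbeats 1000000

open Real

private lemma flipA13 {x y β : ℝ} (hx : 0 < x) (hy : 0 < y) (hβ : β < 0) (h : x < y ^ (1/β)) :
    y < x ^ β := by
  have h2 := Real.rpow_lt_rpow_of_neg hx h hβ
  rwa [← Real.rpow_mul hy.le, one_div_mul_cancel hβ.ne, Real.rpow_one] at h2

private lemma flipB13 {x y β : ℝ} (hx : 0 < x) (hy : 0 < y) (hβ : β < 0) (h : y < x ^ β) :
    x < y ^ (1/β) := by
  have h2 := Real.rpow_lt_rpow_of_neg hy h (one_div_neg.mpr hβ)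
  rwa [← Real.rpow_mul hx.le, mul_one_div_cancel hβ.ne, Real.rpow_one] at h2

/-- Corollary 3.8 (Case B): the maximal degree `p_λ` of spherical harmonics occurring in
an eigenfunction with eigenvalue `λ < 0` satisfies `p_λ ≍ (-λ)^{(m+2)/(2m)}` as `λ → 0⁻`. -/
theorem stmt13 (d : ℕ) (hd : 2 ≤ d) (v : ℝ → ℝ) (hv : ContinuousOn v (Set.Ioi 0))
    (C s : ℝ) (hC : 0 < C) (hs : s ∈ Set.Ioo (0 : ℝ) 2)
    (hlow : ∀ r ∈ Set.Ioc (0 : ℝ) 1, v r ≥ -C * r ^ (-s))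
    (c m R : ℝ) (hc : 0 < c) (hm : m ∈ Set.Ioo (-2 : ℝ) 0) (hR : 0 < R)
    (hdecay : ∀ r ≥ R, -(1 / c) * r ^ m ≤ v r ∧ v r ≤ -c * r ^ m) :
    ∃ K ≥ (1 : ℝ), ∃ δ > (0 : ℝ), ∀ lam ∈ Set.Ioo (-δ) (0 : ℝ),
      (1 / K) * (-lam) ^ ((m + 2) / (2 * m)) ≤
        ((sSup {ℓ : ℕ | 1 ≤ ℓ ∧
          sInf ((fun r : ℝ => v r + (ℓ : ℝ) * ((ℓ : ℝ) + (d : ℝ) - 2) / r ^ 2) ''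
            Set.Ioi 0) < lam} : ℕ) : ℝ) ∧
      ((sSup {ℓ : ℕ | 1 ≤ ℓ ∧
          sInf ((fun r : ℝ => v r + (ℓ : ℝ) * ((ℓ : ℝ) + (d : ℝ) - 2) / r ^ 2) ''
            Set.Ioi 0) < lam} : ℕ) : ℝ) ≤ K * (-lam) ^ ((m + 2) / (2 * m)) := by
  obtain ⟨hs0, hs2⟩ := hs
  obtain ⟨hm2, hm0⟩ := hm
  have hm2' : (0:ℝ) < m + 2 := by linarith only [hm2]
  have hd2 : (2:ℝ) ≤ (d:ℝ) := by exact_mod_cast hd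
  -- lower bound for v on [1, max R 1]
  obtain ⟨M0, hM0⟩ : BddBelow (v '' Set.Icc 1 (max R 1)) :=
    IsCompact.bddBelow_image isCompact_Icc
      (hv.mono (fun x hx => lt_of_lt_of_le one_pos hx.1))
  set M : ℝ := max (-M0) 0 with hMdef
  have hMnn : 0 ≤ M := le_max_right _ _
  have hM : ∀ r ∈ Set.Icc (1:ℝ) (max R 1), -M ≤ v r := by
    intro r hr
    have h1 : M0 ≤ v r := hM0 (Set.mem_image_of_mem v hr)
    have h2 : -M ≤ M0 := neg_le.mpr (le_max_left _ _)
    linarith only [h1, h2]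
  set A : ℝ := max (max C (1/c)) (max ((M+1) * (max R 1) ^ (-m)) 1) with hAdef
  have hA1 : 1 ≤ A := le_trans (le_max_right _ _) (le_max_right _ _)
  have hA0 : 0 < A := lt_of_lt_of_le one_pos hA1
  -- global lower bounds on v
  have low1 : ∀ r : ℝ, 0 < r → r ≤ 1 → -A * r ^ (-s) ≤ v r := by
    intro r h0 h1
    have h := hlow r ⟨h0, h1⟩
    have hp : (0:ℝ) < r ^ (-s) := Real.rpow_pos_of_pos h0 _
    have hCA : C ≤ A := le_trans (le_max_left _ _) (le_max_left _ _)
    linarith only [h, mul_nonneg (sub_nonneg.mpr hCA) hp.le]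
  have low2 : ∀ r : ℝ, 1 ≤ r → -A * r ^ m ≤ v r := by
    intro r h1
    have h0 : (0:ℝ) < r := lt_of_lt_of_le one_pos h1
    have hp : (0:ℝ) < r ^ m := Real.rpow_pos_of_pos h0 _
    by_cases hrR : R ≤ r
    · have h := (hdecay r hrR).1
      have hcA : 1/c ≤ A := le_trans (le_max_right _ _) (le_max_left _ _)
      linarith only [h, mul_nonneg (sub_nonneg.mpr hcA) hp.le]
    · push_neg at hrR
      have hrR' : r ≤ max R 1 := le_trans hrR.le (le_max_left _ _)
      have hvr := hM r ⟨h1, hrR'⟩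
      have hR0 : (0:ℝ) < max R 1 := lt_of_lt_of_le one_pos (le_max_right _ _)
      have hRm : (max R 1) ^ m ≤ r ^ m := Real.rpow_le_rpow_of_nonpos h0 hrR' hm0.le
      have hAge : (M+1) * (max R 1) ^ (-m) ≤ A := le_trans (le_max_left _ _) (le_max_right _ _)
      have hcancel : (max R 1) ^ (-m) * (max R 1) ^ m = 1 := by
        rw [← Real.rpow_add hR0]; simp
      have h2 : M + 1 ≤ A * r ^ m := by
        calc M + 1 = ((M+1) * (max R 1)^(-m)) * (max R 1)^m := by
              rw [mul_assoc, hcancel, mul_one]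
          _ ≤ A * (max R 1)^m :=
              mul_le_mul_of_nonneg_right hAge (Real.rpow_pos_of_pos hR0 _).le
          _ ≤ A * r ^ m := mul_le_mul_of_nonneg_left hRm hA0.le
      linarith only [hvr, h2]
  -- exponents and constants
  set β : ℝ := 2*m/(m+2) with hβdef
  have hβ0 : β < 0 := div_neg_of_neg_of_pos (by linarith only [hm0]) hm2'
  have h1β : 1/β = (m+2)/(2*m) := by rw [hβdef, one_div_div]
  set c₂ : ℝ := A ^ ((2:ℝ)/(m+2)) with hc₂def
  have hc₂0 : 0 < c₂ := Real.rpow_pos_of_pos hA0 _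
  -- uniform lower bound on the potential with centrifugal term
  have hLB : ∀ ℓ : ℕ, A ≤ (ℓ:ℝ)^2 → ∀ r : ℝ, 0 < r →
      -c₂ * (ℓ:ℝ) ^ β ≤ v r + (ℓ:ℝ)*((ℓ:ℝ)+(d:ℝ)-2)/r^2 := by
    intro ℓ hℓA r hr
    have hℓ2pos : (0:ℝ) < (ℓ:ℝ)^2 := lt_of_lt_of_le hA0 hℓA
    have hℓpos : (0:ℝ) < (ℓ:ℝ) := by
      nlinarith only [hℓ2pos, Nat.cast_nonneg (α := ℝ) ℓ]
    have hr2 : (0:ℝ) < r^2 := by positivity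
    have hnum : (ℓ:ℝ)^2 ≤ (ℓ:ℝ)*((ℓ:ℝ)+(d:ℝ)-2) :=
      by linarith only [mul_nonneg hℓpos.le (sub_nonneg.mpr hd2)]
    have hquot : (ℓ:ℝ)^2/r^2 ≤ (ℓ:ℝ)*((ℓ:ℝ)+(d:ℝ)-2)/r^2 := by gcongr
    have hrhs : -c₂ * (ℓ:ℝ)^β ≤ 0 := by
      linarith only [(mul_pos hc₂0 (Real.rpow_pos_of_pos hℓpos β)).le]
    rcases le_or_gt r 1 with h1 | h1
    · have hv' := low1 r hr h1
      have hs' : r ^ (-s) ≤ r ^ (-2:ℝ) := Real.rpow_le_rpow_of_exponent_ge hr h1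
        (by linarith only [hs2])
      have h2 : r ^ (-2:ℝ) = (r^2)⁻¹ := by
        rw [show (-2:ℝ) = -((2:ℕ):ℝ) by norm_num, Real.rpow_neg hr.le, Real.rpow_natCast]
      have h3 : A * r ^ (-s) ≤ (ℓ:ℝ)^2 * (r^2)⁻¹ := by
        calc A * r^(-s) ≤ A * (r^2)⁻¹ := by
              rw [← h2]; exact mul_le_mul_of_nonneg_left hs' hA0.le
          _ ≤ (ℓ:ℝ)^2 * (r^2)⁻¹ :=
              mul_le_mul_of_nonneg_right hℓA (inv_nonneg.mpr hr2.le)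
      have h4 : (ℓ:ℝ)^2 * (r^2)⁻¹ = (ℓ:ℝ)^2/r^2 := (div_eq_mul_inv _ _).symm
      linarith only [hquot, hrhs, hv', h3, h4]
    · have hv' := low2 r h1.le
      set x : ℝ := (ℓ:ℝ)^2 / A with hxdef
      have hx1 : 1 ≤ x := (one_le_div hA0).mpr hℓA
      have hx0 : 0 < x := lt_of_lt_of_le one_pos hx1
      set r₀ : ℝ := x ^ (1/(m+2)) with hr₀def
      have hr₀1 : 1 ≤ r₀ := by
        calc (1:ℝ) = 1 ^ (1/(m+2)) := (Real.one_rpow _).symm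
          _ ≤ x ^ (1/(m+2)) :=
              Real.rpow_le_rpow zero_le_one hx1 (one_div_nonneg.mpr hm2'.le)
      have hr₀0 : (0:ℝ) < r₀ := lt_of_lt_of_le one_pos hr₀1
      have hr₀pow : r₀ ^ (m+2) = x := by
        rw [hr₀def, ← Real.rpow_mul hx0.le, one_div_mul_cancel hm2'.ne', Real.rpow_one]
      rcases le_or_gt r r₀ with h2 | h2
      · have hkey : A * r ^ m ≤ (ℓ:ℝ)^2 / r^2 := by
          rw [le_div_iff₀ hr2]
          have hpm : r ^ m * r ^ 2 = r ^ (m+2) := by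
            rw [← Real.rpow_natCast r 2, ← Real.rpow_add hr]; norm_num
          calc A * r ^ m * r ^ 2 = A * (r ^ (m+2)) := by rw [mul_assoc, hpm]
            _ ≤ A * r₀ ^ (m+2) :=
                mul_le_mul_of_nonneg_left (Real.rpow_le_rpow hr.le h2 hm2'.le) hA0.le
            _ = A * x := by rw [hr₀pow]
            _ = (ℓ:ℝ)^2 := by rw [hxdef]; field_simp
        linarith only [hquot, hv', hkey, hrhs]
      · have hmle : r ^ m ≤ r₀ ^ m := Real.rpow_le_rpow_of_nonpos hr₀0 h2.le hm0.le
        have hfrac : 0 ≤ (ℓ:ℝ)*((ℓ:ℝ)+(d:ℝ)-2)/r^2 := by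
          apply div_nonneg _ hr2.le
          linarith only [hnum, hℓ2pos]
        have heq : A * r₀ ^ m = c₂ * (ℓ:ℝ)^β := by
          rw [hr₀def, ← Real.rpow_mul hx0.le, hxdef,
            Real.div_rpow (by positivity) hA0.le,
            ← Real.rpow_natCast (ℓ:ℝ) 2, ← Real.rpow_mul (Nat.cast_nonneg ℓ)]
          have e1 : ((2:ℕ):ℝ)*(1/(m+2)*m) = β := by
            push_cast; rw [hβdef]; field_simp
          have e2 : A / A^(1/(m+2)*m) = A^((2:ℝ)/(m+2)) := by
            nth_rewrite 1 [show A = A^(1:ℝ) from (Real.rpow_one A).symm]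
            rw [← Real.rpow_sub hA0]
            congr 1
            field_simp
            ring
          rw [e1, hc₂def, show A * ((ℓ:ℝ)^β / A^(1/(m+2)*m))
              = (A / A^(1/(m+2)*m)) * (ℓ:ℝ)^β by ring, e2]
        have h3 : A * r ^ m ≤ A * r₀ ^ m := mul_le_mul_of_nonneg_left hmle hA0.le
        have hvmid : -(c₂ * (ℓ:ℝ)^β) ≤ v r := by
          linarith only [hv', h3, heq]
        linarith only [hvmid, hfrac]
  -- constants for the existence part
  set Q : ℝ := 2*(1+(d:ℝ))/c with hQdef
  have hQ0 : 0 < Q := by positivity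
  set c₃ : ℝ := (c/2) * Q ^ (m/(m+2)) with hc₃def
  have hc₃0 : 0 < c₃ := mul_pos (by linarith only [hc]) (Real.rpow_pos_of_pos hQ0 _)
  set DD : ℝ := c₃ ^ ((m+2)/(2*m)) with hDDdef
  have hDD0 : 0 < DD := Real.rpow_pos_of_pos hc₃0 _
  have hRQ : 0 < R^(m+2)/Q := div_pos (Real.rpow_pos_of_pos hR _) hQ0
  set E : ℝ := 2 + A + R^(m+2)/Q with hEdef
  have hE2 : 2 ≤ E := by rw [hEdef]; linarith only [hRQ, hA0]
  set T : ℝ := max A (4*DD*E) with hTdef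
  set T' : ℝ := max T 1 with hT'def
  have hT'1 : 1 ≤ T' := le_max_right _ _
  have hT'0 : 0 < T' := lt_of_lt_of_le one_pos hT'1
  have hc₂α : 0 < c₂ ^ ((m+2)/(2*m)) := Real.rpow_pos_of_pos hc₂0 _
  set K : ℝ := 1 + 4*DD + A + 1/c₂^((m+2)/(2*m)) with hKdef
  have hK1 : 1 ≤ K := by
    have h1 : 0 < 1/c₂^((m+2)/(2*m)) := by positivity
    rw [hKdef]; linarith only [h1, hDD0, hA0]
  refine ⟨K, hK1, T' ^ (2*m/(m+2)), Real.rpow_pos_of_pos hT'0 _, ?_⟩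
  intro lam hlam
  obtain ⟨hlam1, hlam2⟩ := hlam
  have hl0 : 0 < -lam := by linarith only [hlam2]
  have hα0 : (m+2)/(2*m) < 0 := div_neg_of_pos_of_neg hm2' (by linarith only [hm0])
  set τ : ℝ := (-lam) ^ ((m+2)/(2*m)) with hτdef
  have hτ0 : 0 < τ := Real.rpow_pos_of_pos hl0 _
  have hτT : T ≤ τ := by
    have hlt : -lam < T' ^ (2*m/(m+2)) := by
      have := neg_lt_neg hlam1; simpa using this
    have h2 := Real.rpow_lt_rpow_of_neg hl0 hlt hα0
    rw [← Real.rpow_mul hT'0.le] at h2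
    have hmne : m ≠ 0 := ne_of_lt hm0
    have hm2ne : m + 2 ≠ 0 := hm2'.ne'
    have hmul : (2*m/(m+2)) * ((m+2)/(2*m)) = 1 := by
      field_simp
    rw [hmul, Real.rpow_one] at h2
    exact le_trans (le_max_left T 1) h2.le
  have hτA : A ≤ τ := le_trans (le_max_left _ _) hτT
  have hτE : 4*DD*E ≤ τ := le_trans (le_max_right _ _) hτT
  -- the set of admissible degrees
  set S : Set ℕ := {ℓ : ℕ | 1 ≤ ℓ ∧
    sInf ((fun r : ℝ => v r + (ℓ : ℝ) * ((ℓ : ℝ) + (d : ℝ) - 2) / r ^ 2) ''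
      Set.Ioi 0) < lam} with hSdef
  -- choice of a large admissible degree
  set x : ℝ := τ/(2*DD) with hxdef
  have hx0 : 0 < x := by positivity
  have hxE : E ≤ x := by
    rw [hxdef, le_div_iff₀ (by positivity)]
    linarith only [hτE, mul_nonneg hDD0.le (show (0:ℝ) ≤ E by linarith only [hE2])]
  have hx2 : 2 ≤ x := le_trans hE2 hxE
  set ℓ : ℕ := ⌊x⌋₊ with hℓdef
  have hℓx : (ℓ:ℝ) ≤ x := Nat.floor_le hx0.le
  have hℓlow : x - 1 < (ℓ:ℝ) := Nat.sub_one_lt_floor x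
  have hℓE : E - 1 ≤ (ℓ:ℝ) := by linarith only [hxE, hℓlow]
  have hℓ1R : (1:ℝ) ≤ (ℓ:ℝ) := by linarith only [hℓE, hE2]
  have hℓ0 : (0:ℝ) < (ℓ:ℝ) := lt_of_lt_of_le one_pos hℓ1R
  have hℓ1 : 1 ≤ ℓ := by exact_mod_cast hℓ1R
  have hℓsq : (ℓ:ℝ) ≤ (ℓ:ℝ)^2 := by nlinarith only [hℓ1R]
  have hℓA : A ≤ (ℓ:ℝ)^2 := by
    rw [hEdef] at hℓE
    linarith only [hℓsq, hℓE, hRQ]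
  have hℓR : R^(m+2) ≤ Q * (ℓ:ℝ)^2 := by
    have h1 : R^(m+2)/Q ≤ (ℓ:ℝ) := by
      rw [hEdef] at hℓE
      linarith only [hℓE, hA0]
    have h2 : Q * (R^(m+2)/Q) = R^(m+2) := mul_div_cancel₀ _ hQ0.ne'
    have h3 := mul_le_mul_of_nonneg_left h1 hQ0.le
    have h4 := mul_le_mul_of_nonneg_left hℓsq hQ0.le
    linarith only [h2, h3, h4]
  -- the witness radius
  have hQl0 : 0 < Q * (ℓ:ℝ)^2 := by positivity
  set ρ : ℝ := (Q * (ℓ:ℝ)^2) ^ (1/(m+2)) with hρdef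
  have hρ0 : 0 < ρ := Real.rpow_pos_of_pos hQl0 _
  have hρR : R ≤ ρ := by
    have h1 : R = (R^(m+2))^(1/(m+2)) := by
      rw [← Real.rpow_mul hR.le, mul_one_div_cancel hm2'.ne', Real.rpow_one]
    rw [h1]
    exact Real.rpow_le_rpow (Real.rpow_pos_of_pos hR _).le hℓR
      (one_div_nonneg.mpr hm2'.le)
  have hρpow : ρ ^ (m+2) = Q * (ℓ:ℝ)^2 := by
    rw [hρdef, ← Real.rpow_mul hQl0.le, one_div_mul_cancel hm2'.ne', Real.rpow_one]
  have hρ2 : (0:ℝ) < ρ^2 := by positivity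
  have hnum2 : (ℓ:ℝ)*((ℓ:ℝ)+(d:ℝ)-2) ≤ (1+(d:ℝ))*(ℓ:ℝ)^2 := by
    linarith only [mul_nonneg (mul_nonneg (show (0:ℝ) ≤ (d:ℝ) by linarith only [hd2]) hℓ0.le)
      (show (0:ℝ) ≤ (ℓ:ℝ)-1 by linarith only [hℓ1R]), hℓ0.le]
  have hfr : (ℓ:ℝ)*((ℓ:ℝ)+(d:ℝ)-2)/ρ^2 ≤ (c/2) * ρ^m := by
    rw [div_le_iff₀ hρ2]
    have hpm : ρ^m*ρ^2 = ρ^(m+2) := by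
      rw [← Real.rpow_natCast ρ 2, ← Real.rpow_add hρ0]; norm_num
    calc (ℓ:ℝ)*((ℓ:ℝ)+(d:ℝ)-2) ≤ (1+(d:ℝ))*(ℓ:ℝ)^2 := hnum2
      _ = (c/2) * (Q * (ℓ:ℝ)^2) := by rw [hQdef]; field_simp
      _ = (c/2) * ρ^(m+2) := by rw [hρpow]
      _ = (c/2)*ρ^m*ρ^2 := by rw [mul_assoc, hpm]
  have hfρ : v ρ + (ℓ:ℝ)*((ℓ:ℝ)+(d:ℝ)-2)/ρ^2 ≤ -(c/2) * ρ^m := by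
    have h1 : v ρ ≤ -c * ρ^m := (hdecay ρ hρR).2
    linarith only [h1, hfr]
  have hρm : (c/2) * ρ^m = c₃ * (ℓ:ℝ)^β := by
    rw [hρdef, ← Real.rpow_mul hQl0.le,
      Real.mul_rpow hQ0.le (by positivity),
      ← Real.rpow_natCast (ℓ:ℝ) 2, ← Real.rpow_mul (Nat.cast_nonneg ℓ)]
    have e1 : (1:ℝ)/(m+2)*m = m/(m+2) := by ring
    have e2 : ((2:ℕ):ℝ)*(m/(m+2)) = β := by
      push_cast; rw [hβdef]; field_simp
    rw [e1, e2, hc₃def]; ring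
  have hℓltD : (ℓ:ℝ) < ((-lam)/c₃) ^ (1/β) := by
    have hdivD : ((-lam)/c₃) ^ (1/β) = τ / DD := by
      rw [h1β, Real.div_rpow hl0.le hc₃0.le]
    rw [hdivD]
    calc (ℓ:ℝ) ≤ x := hℓx
      _ = τ/(2*DD) := rfl
      _ < τ/DD := div_lt_div_of_pos_left hτ0 hDD0 (by linarith only [hDD0])
  have hflip : (-lam)/c₃ < (ℓ:ℝ)^β := flipA13 hℓ0 (div_pos hl0 hc₃0) hβ0 hℓltD
  have hlt : -(c₃ * (ℓ:ℝ)^β) < lam := by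
    have h2 := (div_lt_iff₀ hc₃0).mp hflip
    linarith only [h2]
  have hmem : ℓ ∈ S := by
    refine ⟨hℓ1, ?_⟩
    have himg : v ρ + (ℓ:ℝ)*((ℓ:ℝ)+(d:ℝ)-2)/ρ^2 ∈
        ((fun r : ℝ => v r + (ℓ : ℝ) * ((ℓ : ℝ) + (d : ℝ) - 2) / r ^ 2) '' Set.Ioi 0) :=
      ⟨ρ, Set.mem_Ioi.mpr hρ0, rfl⟩
    have hbb : BddBelow ((fun r : ℝ => v r + (ℓ : ℝ) * ((ℓ : ℝ) + (d : ℝ) - 2) / r ^ 2) ''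
        Set.Ioi 0) := by
      refine ⟨-c₂*(ℓ:ℝ)^β, ?_⟩
      rintro y ⟨r, hr, rfl⟩
      exact hLB ℓ hℓA r (Set.mem_Ioi.mp hr)
    calc sInf ((fun r : ℝ => v r + (ℓ : ℝ) * ((ℓ : ℝ) + (d : ℝ) - 2) / r ^ 2) '' Set.Ioi 0)
        ≤ v ρ + (ℓ:ℝ)*((ℓ:ℝ)+(d:ℝ)-2)/ρ^2 := csInf_le hbb himg
      _ ≤ -(c/2) * ρ^m := hfρ
      _ = -(c₃*(ℓ:ℝ)^β) := by rw [← hρm]; ring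
      _ < lam := hlt
  -- upper bound for every element of S
  have hub : ∀ n ∈ S, (n:ℝ) ≤ K * τ := by
    rintro n ⟨hn1, hninf⟩
    have hn1R : (1:ℝ) ≤ (n:ℝ) := by exact_mod_cast hn1
    have hn0 : (0:ℝ) < (n:ℝ) := lt_of_lt_of_le one_pos hn1R
    by_cases hnA : A ≤ (n:ℝ)^2
    · have hbound : -c₂*(n:ℝ)^β ≤
          sInf ((fun r : ℝ => v r + (n : ℝ) * ((n : ℝ) + (d : ℝ) - 2) / r ^ 2) '' Set.Ioi 0) := by
        refine le_csInf ⟨_, ⟨1, Set.mem_Ioi.mpr one_pos, rfl⟩⟩ ?_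
        rintro y ⟨r, hr, rfl⟩
        exact hLB n hnA r (Set.mem_Ioi.mp hr)
      have h1 : (-lam)/c₂ < (n:ℝ)^β := by
        have h0 : -c₂*(n:ℝ)^β < lam := lt_of_le_of_lt hbound hninf
        rw [div_lt_iff₀ hc₂0]
        linarith only [h0]
      have h2 := flipB13 hn0 (div_pos hl0 hc₂0) hβ0 h1
      have h3 : ((-lam)/c₂)^(1/β) = τ / c₂^((m+2)/(2*m)) := by
        rw [h1β, Real.div_rpow hl0.le hc₂0.le]
      have h5 : 1/c₂^((m+2)/(2*m)) ≤ K := by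
        rw [hKdef]; linarith only [hDD0, hA0]
      calc (n:ℝ) ≤ τ / c₂^((m+2)/(2*m)) := by rw [← h3]; exact h2.le
        _ = (1/c₂^((m+2)/(2*m))) * τ := by ring
        _ ≤ K * τ := mul_le_mul_of_nonneg_right h5 hτ0.le
    · push_neg at hnA
      have hnA2 : (n:ℝ)^2 < A^2 := lt_of_lt_of_le hnA (by nlinarith only [hA1, hA0])
      have hnlt : (n:ℝ) < A := lt_of_pow_lt_pow_left₀ 2 hA0.le hnA2
      calc (n:ℝ) ≤ A := hnlt.le
        _ ≤ τ := hτA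
        _ ≤ K*τ := by
            linarith only [mul_nonneg (show (0:ℝ) ≤ K - 1 by linarith only [hK1]) hτ0.le]
  have hbdd : BddAbove S := by
    refine ⟨⌈K*τ⌉₊, fun n hn => ?_⟩
    have h2 : (n:ℝ) ≤ (⌈K*τ⌉₊:ℝ) := le_trans (hub n hn) (Nat.le_ceil _)
    exact_mod_cast h2
  have hpmem : sSup S ∈ S := Nat.sSup_mem ⟨ℓ, hmem⟩ hbdd
  constructor
  · have hle : (ℓ:ℝ) ≤ ((sSup S : ℕ) : ℝ) := by
      exact_mod_cast le_csSup hbdd hmem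
    have hK4 : 4*DD ≤ K := by
      rw [hKdef]
      have h1 : 0 < 1/c₂^((m+2)/(2*m)) := by positivity
      linarith only [h1, hA0]
    have h4 : (1/K) * τ ≤ (1/(4*DD)) * τ :=
      mul_le_mul_of_nonneg_right
        (one_div_le_one_div_of_le (by linarith only [hDD0]) hK4) hτ0.le
    have hDDne : DD ≠ 0 := hDD0.ne'
    have h5 : (1/(4*DD)) * τ = x/2 := by rw [hxdef]; ring
    calc (1/K) * τ ≤ x/2 := by linarith only [h4, h5]
      _ ≤ (ℓ:ℝ) := by linarith only [hx2, hℓlow]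
      _ ≤ _ := hle
  · exact hub _ hpmem
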